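/- Let (V, {Mₙ(V)⁺}, {|·|_{m,n}}) be an absolutely matrix ordered space. For any v ∈ M_{m,n}(V), the matrix [[|v*|_{n,m}, v],[v*, |v|_{m,n}]] belongs to M_{m+n}(V)⁺, and |[[0_m, v],[v*, 0_n]]|_{m+n} = |v*|_{n,m} ⊕ |v|_{m,n}. -/

import Mathlib

open scoped Matrix

/-- Left multiplication of a matrix over `V` by a scalar matrix: `(α v) i j = ∑ k, α i k • v k j`. -/
def matSMulL {V : Type*} [AddCommGroup V] [Module ℂ V] {r m n : ℕ}
    (α : Matrix (Fin r) (Fin m) ℂ) (v : Matrix (Fin m) (Fin n) V) :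
    Matrix (Fin r) (Fin n) V :=
  fun i j => ∑ k, α i k • v k j

/-- Right multiplication of a matrix over `V` by a scalar matrix. -/
def matSMulR {V : Type*} [AddCommGroup V] [Module ℂ V] {m n s : ℕ}
    (v : Matrix (Fin m) (Fin n) V) (β : Matrix (Fin n) (Fin s) ℂ) :
    Matrix (Fin m) (Fin s) V :=
  fun i j => ∑ k, β k j • v i k

/-- The (L2) operator norm of a complex scalar matrix. -/
noncomputable def matOpNorm {r m : ℕ} (α : Matrix (Fin r) (Fin m) ℂ) : ℝ :=
  ‖LinearMap.toContinuousLinearMap (Matrix.toEuclideanLin α)‖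

/-- An absolutely matrix ordered space: a matrix ordered `*`-vector space `V` together with
absolute value maps `|·|_{m,n} : M_{m,n}(V) → Mₙ(V)⁺` satisfying conditions (1), (2), (3). -/
structure AbsMatrixOrderedSpace (V : Type*) [AddCommGroup V] [Module ℂ V]
    [StarAddMonoid V] [StarModule ℂ V] where
  /-- the matrix cones -/
  P : ∀ n : ℕ, Set (Matrix (Fin n) (Fin n) V)
  P_sa : ∀ {n : ℕ}, ∀ a ∈ P n, aᴴ = a
  P_add : ∀ {n : ℕ}, ∀ a ∈ P n, ∀ b ∈ P n, a + b ∈ P n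
  P_smul : ∀ {n : ℕ} (k : ℝ), 0 ≤ k → ∀ a ∈ P n, (k : ℂ) • a ∈ P n
  /-- compatibility of the cones: `α* v α ∈ M_m(V)⁺` for `v ∈ Mₙ(V)⁺`, `α ∈ Mₙ,ₘ` -/
  P_conj : ∀ {n m : ℕ}, ∀ v ∈ P n, ∀ α : Matrix (Fin n) (Fin m) ℂ,
    matSMulR (matSMulL αᴴ v) α ∈ P m
  /-- the absolute value maps `|·|_{m,n}` -/
  abs : ∀ {m n : ℕ}, Matrix (Fin m) (Fin n) V → Matrix (Fin n) (Fin n) V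
  abs_mem : ∀ {m n : ℕ} (v : Matrix (Fin m) (Fin n) V), abs v ∈ P n
  -- (1) each `(Mₙ(V)_sa, Mₙ(V)⁺, |·|ₙ)` is an absolutely ordered space:
  abs_of_mem : ∀ {n : ℕ}, ∀ a ∈ P n, abs a = a
  abs_add_mem : ∀ {n : ℕ} (a : Matrix (Fin n) (Fin n) V), aᴴ = a → abs a + a ∈ P n
  abs_sub_mem : ∀ {n : ℕ} (a : Matrix (Fin n) (Fin n) V), aᴴ = a → abs a - a ∈ P n
  abs_smul_real : ∀ {n : ℕ} (k : ℝ) (a : Matrix (Fin n) (Fin n) V), aᴴ = a →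
    abs ((k : ℂ) • a) = ((|k| : ℝ) : ℂ) • abs a
  axiom_d : ∀ {n : ℕ} (u v w : Matrix (Fin n) (Fin n) V), uᴴ = u → vᴴ = v → wᴴ = w →
    abs (u - v) = u + v → w ∈ P n → v - w ∈ P n → abs (u - w) = u + w
  axiom_e₁ : ∀ {n : ℕ} (u v w : Matrix (Fin n) (Fin n) V), uᴴ = u → vᴴ = v → wᴴ = w →
    abs (u - v) = u + v → abs (u - w) = u + w → abs (u - abs (v + w)) = u + abs (v + w)
  axiom_e₂ : ∀ {n : ℕ} (u v w : Matrix (Fin n) (Fin n) V), uᴴ = u → vᴴ = v → wᴴ = w →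
    abs (u - v) = u + v → abs (u - w) = u + w → abs (u - abs (v - w)) = u + abs (v - w)
  /-- (2): `|α v β|_{r,s} ≤ ‖α‖ ⬝ ||v|_{m,n} β|_{n,s}` -/
  abs_mul_le : ∀ {m n r s : ℕ} (v : Matrix (Fin m) (Fin n) V)
    (α : Matrix (Fin r) (Fin m) ℂ) (β : Matrix (Fin n) (Fin s) ℂ),
    ((matOpNorm α : ℂ) • abs (matSMulR (abs v) β)) - abs (matSMulR (matSMulL α v) β) ∈ P s
  /-- (3): `|v ⊕ w| = |v| ⊕ |w|` -/
  abs_dirSum : ∀ {m n r s : ℕ} (v : Matrix (Fin m) (Fin n) V) (w : Matrix (Fin r) (Fin s) V),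
    abs ((Matrix.reindex finSumFinEquiv finSumFinEquiv) (Matrix.fromBlocks v 0 0 w)) =
      (Matrix.reindex finSumFinEquiv finSumFinEquiv) (Matrix.fromBlocks (abs v) 0 0 (abs w))

set_option linter.unusedSectionVars false

section Aux

variable {V : Type*} [AddCommGroup V] [Module ℂ V] [StarAddMonoid V] [StarModule ℂ V]

/-- permutation-type scalar matrix -/
noncomputable def permMat {a b : ℕ} (σ : Fin a ≃ Fin b) : Matrix (Fin a) (Fin b) ℂ :=
  fun i j => if j = σ i then 1 else 0

lemma permMat_opNorm_le {a b : ℕ} (σ : Fin a ≃ Fin b) : matOpNorm (permMat σ) ≤ 1 := by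
  apply ContinuousLinearMap.opNorm_le_bound _ zero_le_one
  intro x
  rw [one_mul]
  have hx : ∀ (y : EuclideanSpace ℂ (Fin b)),
      LinearMap.toContinuousLinearMap (Matrix.toEuclideanLin (permMat σ)) y =
      (WithLp.toLp 2 (fun i => y (σ i)) : EuclideanSpace ℂ (Fin a)) := by
    intro y
    ext i
    show (Matrix.toEuclideanLin (permMat σ) y) i = y (σ i)
    rw [Matrix.toEuclideanLin_apply]
    show (permMat σ *ᵥ _) i = _
    simp [Matrix.mulVec, dotProduct, permMat]
  rw [hx]
  rw [EuclideanSpace.norm_eq, EuclideanSpace.norm_eq]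
  apply le_of_eq
  congr 1
  exact Equiv.sum_comp σ (fun j => ‖x j‖ ^ 2)

lemma permMat_conjTranspose {a b : ℕ} (σ : Fin a ≃ Fin b) :
    (permMat σ)ᴴ = permMat σ.symm := by
  ext i j
  simp only [Matrix.conjTranspose_apply, permMat]
  have hiff : (i = σ j) ↔ (j = σ.symm i) := by
    constructor <;> intro h <;> simp [h]
  simp only [hiff]
  split <;> simp

lemma matSMulL_permMat {a b n : ℕ} (σ : Fin a ≃ Fin b) (w : Matrix (Fin b) (Fin n) V) :
    matSMulL (permMat σ) w = fun i j => w (σ i) j := by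
  funext i j
  simp [matSMulL, permMat, ite_smul]

lemma matSMulR_one {a n : ℕ} (w : Matrix (Fin a) (Fin n) V) :
    matSMulR w (1 : Matrix (Fin n) (Fin n) ℂ) = w := by
  funext i j
  simp [matSMulR, Matrix.one_apply, ite_smul]

lemma AbsMatrixOrderedSpace.eq_of_mem_mem (A : AbsMatrixOrderedSpace V) {n : ℕ}
    {x y : Matrix (Fin n) (Fin n) V} (h1 : x - y ∈ A.P n) (h2 : y - x ∈ A.P n) : x = y := by
  have hd : (x - y)ᴴ = x - y := A.P_sa _ h1
  have e1 : A.abs (x - y) = x - y := A.abs_of_mem _ h1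
  have e2 : A.abs (y - x) = y - x := A.abs_of_mem _ h2
  have e3 : A.abs (y - x) = A.abs (x - y) := by
    have hyx : y - x = (((-1 : ℝ)) : ℂ) • (x - y) := by
      push_cast
      rw [neg_smul, one_smul, neg_sub]
    rw [hyx, A.abs_smul_real (-1) _ hd]
    norm_num
  have hxy : y - x = x - y := by rw [← e2, e3, e1]
  have h2d : (x - y) + (x - y) = 0 := by
    nth_rewrite 2 [← hxy]
    abel
  have hkey : (2⁻¹ : ℂ) • ((x - y) + (x - y)) = x - y := by
    rw [← two_smul ℂ, smul_smul]
    norm_num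
  rw [h2d, smul_zero] at hkey
  exact sub_eq_zero.mp hkey.symm

lemma AbsMatrixOrderedSpace.sub_mem_of_smul (A : AbsMatrixOrderedSpace V) {n : ℕ}
    {a b : Matrix (Fin n) (Fin n) V} (ha : a ∈ A.P n) {c : ℝ} (hc : c ≤ 1)
    (h : (c : ℂ) • a - b ∈ A.P n) : a - b ∈ A.P n := by
  have h2 := A.P_smul (1 - c) (by linarith) a ha
  have h3 := A.P_add _ h2 _ h
  have key : (((1 - c : ℝ)) : ℂ) • a + ((c : ℂ) • a - b) = a - b := by
    push_cast
    rw [sub_smul, one_smul]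
    abel
  rwa [key] at h3

end Aux

theorem abs_offDiagonal_block' {V : Type*} [AddCommGroup V] [Module ℂ V]
    [StarAddMonoid V] [StarModule ℂ V] (A : AbsMatrixOrderedSpace V)
    {m n : ℕ} (v : Matrix (Fin m) (Fin n) V) :
    (Matrix.reindex finSumFinEquiv finSumFinEquiv)
        (Matrix.fromBlocks (A.abs vᴴ) v vᴴ (A.abs v)) ∈ A.P (m + n) ∧
    A.abs ((Matrix.reindex finSumFinEquiv finSumFinEquiv)
        (Matrix.fromBlocks 0 v vᴴ 0)) =
      (Matrix.reindex finSumFinEquiv finSumFinEquiv)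
        (Matrix.fromBlocks (A.abs vᴴ) 0 0 (A.abs v)) := by
  classical
  set τ : Fin (m + n) ≃ Fin (n + m) :=
    finSumFinEquiv.symm.trans ((Equiv.sumComm (Fin m) (Fin n)).trans finSumFinEquiv) with hτ
  set W : Matrix (Fin (n + m)) (Fin (m + n)) V :=
    (Matrix.reindex finSumFinEquiv finSumFinEquiv) (Matrix.fromBlocks vᴴ 0 0 v) with hW
  have key1 : matSMulL (permMat τ) W =
      (Matrix.reindex finSumFinEquiv finSumFinEquiv) (Matrix.fromBlocks 0 v vᴴ 0) := by
    rw [matSMulL_permMat]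
    funext i j
    have hστ : finSumFinEquiv.symm (τ i) =
        (Equiv.sumComm (Fin m) (Fin n)) (finSumFinEquiv.symm i) := by
      simp [hτ]
    show W (τ i) j = _
    rw [hW]
    simp only [Matrix.reindex_apply, Matrix.submatrix_apply, hστ]
    generalize finSumFinEquiv.symm i = x
    generalize finSumFinEquiv.symm j = y
    rcases x with a | a <;> rcases y with b | b <;>
      simp [Matrix.fromBlocks, Equiv.sumComm]
  have key2 : matSMulL (permMat τ.symm) (matSMulL (permMat τ) W) = W := by
    rw [matSMulL_permMat, matSMulL_permMat]
    funext i j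
    simp
  have habsW : A.abs W = (Matrix.reindex finSumFinEquiv finSumFinEquiv)
      (Matrix.fromBlocks (A.abs vᴴ) 0 0 (A.abs v)) := A.abs_dirSum vᴴ v
  -- the two inequalities
  have h1 : (matOpNorm (permMat τ) : ℂ) • A.abs W - A.abs (matSMulL (permMat τ) W)
      ∈ A.P (m + n) := by
    have := A.abs_mul_le W (permMat τ) (1 : Matrix (Fin (m+n)) (Fin (m+n)) ℂ)
    rwa [matSMulR_one, matSMulR_one, A.abs_of_mem _ (A.abs_mem W)] at this
  have h2 : (matOpNorm (permMat τ.symm) : ℂ) • A.abs (matSMulL (permMat τ) W) - A.abs W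
      ∈ A.P (m + n) := by
    have := A.abs_mul_le (matSMulL (permMat τ) W) (permMat τ.symm) (1 : Matrix (Fin (m+n)) (Fin (m+n)) ℂ)
    rwa [matSMulR_one, matSMulR_one, A.abs_of_mem _ (A.abs_mem _), key2] at this
  have hba : A.abs W - A.abs (matSMulL (permMat τ) W) ∈ A.P (m + n) :=
    A.sub_mem_of_smul (A.abs_mem W) (permMat_opNorm_le τ) h1
  have hab : A.abs (matSMulL (permMat τ) W) - A.abs W ∈ A.P (m + n) :=
    A.sub_mem_of_smul (A.abs_mem _) (permMat_opNorm_le τ.symm) h2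
  have heq : A.abs (matSMulL (permMat τ) W) = A.abs W := A.eq_of_mem_mem hab hba
  have claim2 : A.abs ((Matrix.reindex finSumFinEquiv finSumFinEquiv)
      (Matrix.fromBlocks 0 v vᴴ 0)) =
      (Matrix.reindex finSumFinEquiv finSumFinEquiv)
        (Matrix.fromBlocks (A.abs vᴴ) 0 0 (A.abs v)) := by
    rw [← key1, heq, habsW]
  refine ⟨?_, claim2⟩
  -- first claim
  set w0 : Matrix (Fin (m + n)) (Fin (m + n)) V :=
    (Matrix.reindex finSumFinEquiv finSumFinEquiv) (Matrix.fromBlocks 0 v vᴴ 0) with hw0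
  have hsa : w0ᴴ = w0 := by
    ext i j
    rw [hw0]
    simp only [Matrix.conjTranspose_apply, Matrix.reindex_apply, Matrix.submatrix_apply]
    generalize finSumFinEquiv.symm i = x
    generalize finSumFinEquiv.symm j = y
    rcases x with a | a <;> rcases y with b | b <;>
      simp [Matrix.fromBlocks, Matrix.conjTranspose_apply]
  have hmem := A.abs_add_mem w0 hsa
  have hsum : A.abs w0 + w0 = (Matrix.reindex finSumFinEquiv finSumFinEquiv)
      (Matrix.fromBlocks (A.abs vᴴ) v vᴴ (A.abs v)) := by
    rw [hw0, claim2]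
    ext i j
    simp only [Matrix.add_apply, Matrix.reindex_apply, Matrix.submatrix_apply]
    generalize finSumFinEquiv.symm i = x
    generalize finSumFinEquiv.symm j = y
    rcases x with a | a <;> rcases y with b | b <;>
      simp [Matrix.fromBlocks]
  rwa [hsum] at hmem

/-- For any `v ∈ M_{m,n}(V)`, the matrix `[[|v*|, v],[v*, |v|]]` is positive and
`|[[0, v],[v*, 0]]| = |v*| ⊕ |v|`. -/
theorem abs_offDiagonal_block {V : Type*} [AddCommGroup V] [Module ℂ V]
    [StarAddMonoid V] [StarModule ℂ V] (A : AbsMatrixOrderedSpace V)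
    {m n : ℕ} (v : Matrix (Fin m) (Fin n) V) :
    (Matrix.reindex finSumFinEquiv finSumFinEquiv)
        (Matrix.fromBlocks (A.abs vᴴ) v vᴴ (A.abs v)) ∈ A.P (m + n) ∧
    A.abs ((Matrix.reindex finSumFinEquiv finSumFinEquiv)
        (Matrix.fromBlocks 0 v vᴴ 0)) =
      (Matrix.reindex finSumFinEquiv finSumFinEquiv)
        (Matrix.fromBlocks (A.abs vᴴ) 0 0 (A.abs v)) :=
  abs_offDiagonal_block' A v
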